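/- Let d ∈ (−1,1), ω ∈ ℝ, γ > 0 and β ∈ ℂ, and let ρ : [0,∞) → M₂(ℂ) be differentiable with ρ'(t) = L⋆ᵃ(ρ(t)) for all t ≥ 0 and ρ(0) = ϱ. Then for all t ≥ 0, ‖ ρ(t) − (tr ϱ)·ϱᵃ_∞ ‖₁ ≤ 4 e^{−γt} ( ‖ϱ‖_F + |d · tr ϱ| ), where ‖·‖₁ denotes the trace norm (the trace of the positive semidefinite square root of XᴴX), ‖·‖_F the Frobenius norm, and ϱᵃ_∞ is the explicit 2×2 matrix with entries (ϱᵃ_∞)₁₁ = 1/2 + d(γ² + ω²)/(2(γ² + ω² + 2|β|²)), (ϱᵃ_∞)₁₂ = dβ(γ − iω)/(γ² + ω² + 2|β|²), (ϱᵃ_∞)₂₁ = d·conj(β)(γ + iω)/(γ² + ω² + 2|β|²), (ϱᵃ_∞)₂₂ = 1/2 − d(γ² + ω²)/(2(γ² + ω² + 2|β|²)). -/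

import Mathlib

open Matrix ComplexOrder

/-- `σ⁺ = [[0,1],[0,0]]`. -/
noncomputable def sigmaPlus : Matrix (Fin 2) (Fin 2) ℂ := !![0, 1; 0, 0]

/-- `σ⁻ = [[0,0],[1,0]]`. -/
noncomputable def sigmaMinus : Matrix (Fin 2) (Fin 2) ℂ := !![0, 0; 1, 0]

/-- `σ³ = [[1,0],[0,−1]]`. -/
noncomputable def sigma3 : Matrix (Fin 2) (Fin 2) ℂ := !![1, 0; 0, -1]

/-- The atomic GKSL generator `L⋆ᵃ` on `M₂(ℂ)` with parameters `d, ω, γ, β`. -/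
noncomputable def Lstara (d ω γ : ℝ) (β : ℂ) (ϱ : Matrix (Fin 2) (Fin 2) ℂ) :
    Matrix (Fin 2) (Fin 2) ℂ :=
  (-(Complex.I * (ω : ℂ) / 2)) • (sigma3 * ϱ - ϱ * sigma3)
  + ((γ * (1 - d) : ℝ) : ℂ) •
      (sigmaMinus * ϱ * sigmaPlus - (1 / 2 : ℂ) • (sigmaPlus * sigmaMinus * ϱ)
        - (1 / 2 : ℂ) • (ϱ * (sigmaPlus * sigmaMinus)))
  + ((γ * (1 + d) : ℝ) : ℂ) •
      (sigmaPlus * ϱ * sigmaMinus - (1 / 2 : ℂ) • (sigmaMinus * sigmaPlus * ϱ)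
        - (1 / 2 : ℂ) • (ϱ * (sigmaMinus * sigmaPlus)))
  + (((starRingEnd ℂ) β • sigmaMinus - β • sigmaPlus) * ϱ
      - ϱ * ((starRingEnd ℂ) β • sigmaMinus - β • sigmaPlus))

/-- The equilibrium state `ϱᵃ_∞` of the atomic GKSL generator. -/
noncomputable def rhoAInf (d ω γ : ℝ) (β : ℂ) : Matrix (Fin 2) (Fin 2) ℂ :=
  !![((1 / 2 + d * (γ ^ 2 + ω ^ 2) /
        (2 * (γ ^ 2 + ω ^ 2 + 2 * ‖β‖ ^ 2)) : ℝ) : ℂ),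
     (d : ℂ) * β * ((γ : ℂ) - (ω : ℂ) * Complex.I) /
        (((γ ^ 2 + ω ^ 2 + 2 * ‖β‖ ^ 2 : ℝ)) : ℂ);
     (d : ℂ) * (starRingEnd ℂ) β * ((γ : ℂ) + (ω : ℂ) * Complex.I) /
        (((γ ^ 2 + ω ^ 2 + 2 * ‖β‖ ^ 2 : ℝ)) : ℂ),
     ((1 / 2 - d * (γ ^ 2 + ω ^ 2) /
        (2 * (γ ^ 2 + ω ^ 2 + 2 * ‖β‖ ^ 2)) : ℝ) : ℂ)]

/-- The trace norm `‖X‖₁ = tr √(XᴴX)` of a complex matrix. -/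
noncomputable def traceNorm {n : ℕ} (X : Matrix (Fin n) (Fin n) ℂ) : ℝ :=
  (((Matrix.posSemidef_conjTranspose_mul_self X).1.eigenvectorUnitary.1 *
      diagonal (((↑) : ℝ → ℂ) ∘ (√·) ∘ (Matrix.posSemidef_conjTranspose_mul_self X).1.eigenvalues) *
      (star (Matrix.posSemidef_conjTranspose_mul_self X).1.eigenvectorUnitary :
        Matrix (Fin n) (Fin n) ℂ)).trace).re

/-- The Frobenius norm of a complex matrix. -/
noncomputable def frobeniusNorm {n : ℕ} (X : Matrix (Fin n) (Fin n) ℂ) : ℝ :=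
  Real.sqrt (∑ i, ∑ j, ‖X i j‖ ^ 2)

/-! ### Auxiliary lemmas -/

lemma L00' (d ω γ : ℝ) (β : ℂ) (m : Matrix (Fin 2) (Fin 2) ℂ) :
    Lstara d ω γ β m 0 0 = -(γ*(1-d) : ℂ) * m 0 0 + (γ*(1+d) : ℂ) * m 1 1
      - β * m 1 0 - (starRingEnd ℂ) β * m 0 1 := by
  simp [Lstara, sigmaPlus, sigmaMinus, sigma3, Matrix.mul_apply, Fin.sum_univ_two,
    Matrix.add_apply, Matrix.sub_apply, Matrix.smul_apply, Matrix.vecMul, dotProduct,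
    Matrix.vecHead, Matrix.vecTail]
  ring

lemma L01' (d ω γ : ℝ) (β : ℂ) (m : Matrix (Fin 2) (Fin 2) ℂ) :
    Lstara d ω γ β m 0 1 = -((γ:ℂ) + Complex.I * ω) * m 0 1 + β * (m 0 0 - m 1 1) := by
  simp [Lstara, sigmaPlus, sigmaMinus, sigma3, Matrix.mul_apply, Fin.sum_univ_two,
    Matrix.add_apply, Matrix.sub_apply, Matrix.smul_apply, Matrix.vecMul, dotProduct,
    Matrix.vecHead, Matrix.vecTail]
  ring

lemma L10' (d ω γ : ℝ) (β : ℂ) (m : Matrix (Fin 2) (Fin 2) ℂ) :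
    Lstara d ω γ β m 1 0 = -((γ:ℂ) - Complex.I * ω) * m 1 0
      + (starRingEnd ℂ) β * (m 0 0 - m 1 1) := by
  simp [Lstara, sigmaPlus, sigmaMinus, sigma3, Matrix.mul_apply, Fin.sum_univ_two,
    Matrix.add_apply, Matrix.sub_apply, Matrix.smul_apply, Matrix.vecMul, dotProduct,
    Matrix.vecHead, Matrix.vecTail]
  ring

lemma L11' (d ω γ : ℝ) (β : ℂ) (m : Matrix (Fin 2) (Fin 2) ℂ) :
    Lstara d ω γ β m 1 1 = (γ*(1-d) : ℂ) * m 0 0 - (γ*(1+d) : ℂ) * m 1 1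
      + β * m 1 0 + (starRingEnd ℂ) β * m 0 1 := by
  simp [Lstara, sigmaPlus, sigmaMinus, sigma3, Matrix.mul_apply, Fin.sum_univ_two,
    Matrix.add_apply, Matrix.sub_apply, Matrix.smul_apply, Matrix.vecMul, dotProduct,
    Matrix.vecHead, Matrix.vecTail]
  ring

lemma traceNorm_sq_le (X : Matrix (Fin 2) (Fin 2) ℂ) :
    0 ≤ traceNorm X ∧ traceNorm X ^ 2 ≤ 2 * ∑ i, ∑ j, ‖X i j‖ ^ 2 := by
  have hps := Matrix.posSemidef_conjTranspose_mul_self X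
  set U : Matrix (Fin 2) (Fin 2) ℂ := hps.1.eigenvectorUnitary.1 with hUdef
  set Dg : Matrix (Fin 2) (Fin 2) ℂ :=
    diagonal (((↑) : ℝ → ℂ) ∘ (√·) ∘ hps.1.eigenvalues) with hDgdef
  set P := U * Dg * Uᴴ with hPdef
  have hP : P.PosSemidef := by
    apply Matrix.PosSemidef.mul_mul_conjTranspose_same
    rw [hDgdef, posSemidef_diagonal_iff]
    intro i
    simp only [Function.comp_apply, Complex.zero_le_real]
    exact Real.sqrt_nonneg _
  have hPP : P * P = Xᴴ * X := by
    have hUU : Uᴴ * U = 1 := Unitary.star_mul_self_of_mem hps.1.eigenvectorUnitary.2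
    have hDD : Dg * Dg = diagonal (RCLike.ofReal ∘ hps.1.eigenvalues) := by
      rw [hDgdef, diagonal_mul_diagonal]
      congr 1; funext i
      simp only [Function.comp_apply]
      rw [← Complex.ofReal_mul, Real.mul_self_sqrt (hps.eigenvalues_nonneg i)]; rfl
    have hspec := hps.1.spectral_theorem
    rw [Unitary.conjStarAlgAut_apply] at hspec
    calc P * P = U * (Dg * Dg) * Uᴴ := by
          rw [hPdef]
          calc U * Dg * Uᴴ * (U * Dg * Uᴴ) = U * Dg * (Uᴴ * U) * Dg * Uᴴ := by
                simp only [Matrix.mul_assoc]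
            _ = _ := by rw [hUU, Matrix.mul_one]; simp only [Matrix.mul_assoc]
      _ = Xᴴ * X := by rw [hDD]; exact hspec.symm
  have hdiag : ∀ i, 0 ≤ P i i := fun i => hP.diag_nonneg
  have h0 := hdiag 0
  have h1 := hdiag 1
  rw [Complex.le_def] at h0 h1
  simp only [Complex.zero_re, Complex.zero_im] at h0 h1
  have hherm : P 1 0 = (starRingEnd ℂ) (P 0 1) := by
    have := hP.1
    have := congrFun (congrFun this 1) 0
    simpa [Matrix.conjTranspose_apply] using this.symm
  have htr2 : (P * P).trace = (Xᴴ * X).trace := by rw [hPP]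
  have hfro : ((Xᴴ * X).trace).re = ∑ i, ∑ j, ‖X i j‖ ^ 2 := by
    simp [Matrix.trace, Matrix.mul_apply, Matrix.conjTranspose_apply, Fin.sum_univ_two,
      Matrix.diag, Complex.sq_norm, Complex.normSq_apply, Complex.mul_re, Complex.conj_re,
      Complex.conj_im]
    ring
  have htrP2 : ((P * P).trace).re = (P 0 0).re ^ 2 + (P 1 1).re ^ 2
      + 2 * Complex.normSq (P 0 1) := by
    have e0 : (P 0 0).im = 0 := h0.2.symm
    have e1 : (P 1 1).im = 0 := h1.2.symm
    simp [Matrix.trace, Matrix.mul_apply, Fin.sum_univ_two, Matrix.diag, hherm,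
      Complex.mul_re, Complex.normSq_apply, Complex.conj_re, Complex.conj_im, e0, e1]
    ring
  have htrace : traceNorm X = (P 0 0).re + (P 1 1).re := by
    show (Matrix.trace P).re = _
    rw [Matrix.trace_fin_two, Complex.add_re]
  constructor
  · rw [htrace]; linarith [h0.1, h1.1]
  · rw [htrace, ← hfro, ← htr2, htrP2]
    nlinarith [Complex.normSq_nonneg (P 0 1), sq_nonneg ((P 0 0).re - (P 1 1).re)]

lemma HasDerivAt.creal {f : ℝ → ℂ} {f' : ℂ} {t : ℝ} (h : HasDerivAt f f' t) :
    HasDerivAt (fun s => (f s).re) f'.re t := by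
  exact Complex.reCLM.hasFDerivAt.comp_hasDerivAt t h

lemma HasDerivAt.cimag {f : ℝ → ℂ} {f' : ℂ} {t : ℝ} (h : HasDerivAt f f' t) :
    HasDerivAt (fun s => (f s).im) f'.im t := by
  exact Complex.imCLM.hasFDerivAt.comp_hasDerivAt t h

lemma HasDerivAt.cnormSq {f : ℝ → ℂ} {f' : ℂ} {t : ℝ} (h : HasDerivAt f f' t) :
    HasDerivAt (fun s => Complex.normSq (f s))
      (2 * ((f t).re * f'.re + (f t).im * f'.im)) t := by
  have hr := h.creal
  have hi := h.cimag
  have h2 := (hr.mul hr).add (hi.mul hi)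
  have h3 : HasDerivAt (fun s => Complex.normSq (f s))
      (f'.re * (f t).re + (f t).re * f'.re + (f'.im * (f t).im + (f t).im * f'.im)) t := by
    exact h2
  convert h3 using 1
  ring

lemma nsq_sub_le (u v : ℂ) :
    Complex.normSq (u - v) ≤ 2 * Complex.normSq u + 2 * Complex.normSq v := by
  simp only [Complex.normSq_apply, Complex.sub_re, Complex.sub_im]
  nlinarith [sq_nonneg (u.re + v.re), sq_nonneg (u.im + v.im)]

set_option maxHeartbeats 2000000

/-- **Exponential convergence of the atomic GKSL semigroup** (Lemma on `L⋆ᵃ`):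
any solution of `ρ' = L⋆ᵃ(ρ)` with `ρ(0) = ϱ` satisfies
`‖ρ(t) − (tr ϱ)·ϱᵃ_∞‖₁ ≤ 4 e^{−γt}(‖ϱ‖_F + |d · tr ϱ|)` for all `t ≥ 0`. -/
theorem atomic_gksl_exponential_convergence
    (d ω γ : ℝ) (β : ℂ) (hd : -1 < d ∧ d < 1) (hγ : 0 < γ)
    (ρ : ℝ → Matrix (Fin 2) (Fin 2) ℂ) (ϱ : Matrix (Fin 2) (Fin 2) ℂ)
    (hρ0 : ρ 0 = ϱ)
    (hρ : ∀ t ≥ (0 : ℝ), ∀ i j,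
      HasDerivAt (fun s => ρ s i j) ((Lstara d ω γ β (ρ t)) i j) t) :
    ∀ t ≥ (0 : ℝ),
      traceNorm (ρ t - ϱ.trace • rhoAInf d ω γ β) ≤
        4 * Real.exp (-γ * t) * (frobeniusNorm ϱ + ‖(d : ℂ) * ϱ.trace‖) := by
  intro t ht
  obtain ⟨s, hs⟩ : ∃ z : ℂ, z = ϱ.trace := ⟨_, rfl⟩
  rw [← hs]
  obtain ⟨D, hDdef⟩ : ∃ r : ℝ, r = γ^2 + ω^2 + 2 * ‖β‖ ^ 2 := ⟨_, rfl⟩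
  have hD0 : 0 < D := by rw [hDdef]; positivity
  have hDne : (D : ℂ) ≠ 0 := by
    exact_mod_cast Complex.ofReal_ne_zero.mpr hD0.ne'
  have hbb : β * (starRingEnd ℂ) β = ((‖β‖ ^ 2 : ℝ) : ℂ) := by
    rw [Complex.mul_conj, Complex.sq_norm]
  have hDc : ((D:ℝ):ℂ) = (γ:ℂ)^2 + (ω:ℂ)^2 + 2*((‖β‖ ^ 2 : ℝ) : ℂ) := by
    rw [hDdef]; push_cast; ring
  obtain ⟨xinf, hxinf⟩ : ∃ z : ℂ, z = s * ((d * (γ^2+ω^2) / D : ℝ) : ℂ) := ⟨_, rfl⟩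
  obtain ⟨binf, hbinf⟩ : ∃ z : ℂ,
    z = s * ((d:ℂ) * β * ((γ:ℂ) - (ω:ℂ)*Complex.I) / ((D:ℝ):ℂ)) := ⟨_, rfl⟩
  obtain ⟨cinf, hcinf⟩ : ∃ z : ℂ,
    z = s * ((d:ℂ) * (starRingEnd ℂ) β * ((γ:ℂ) + (ω:ℂ)*Complex.I) / ((D:ℝ):ℂ)) := ⟨_, rfl⟩
  -- trace preservation
  have htrconst : ∀ u ≥ (0:ℝ), ρ u 0 0 + ρ u 1 1 = s := by
    intro u hu
    have key : ∀ v ∈ Set.Icc (0:ℝ) u, (fun w => ρ w 0 0 + ρ w 1 1) v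
        = (fun w => ρ w 0 0 + ρ w 1 1) 0 := by
      apply constant_of_has_deriv_right_zero
      · intro v hv
        exact (((hρ v hv.1 0 0).add (hρ v hv.1 1 1)).continuousAt).continuousWithinAt
      · intro v hv
        have h := (hρ v hv.1 0 0).add (hρ v hv.1 1 1)
        have hz : Lstara d ω γ β (ρ v) 0 0 + Lstara d ω γ β (ρ v) 1 1 = 0 := by
          rw [L00', L11']; ring
        rw [hz] at h
        exact h.hasDerivWithinAt
    have := key u ⟨hu, le_refl u⟩
    simp only [hρ0] at this
    rw [this, hs, Matrix.trace_fin_two]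
  -- derivatives of the shifted coordinates
  have hxD : ∀ u ≥ (0:ℝ), HasDerivAt (fun w => ρ w 0 0 - ρ w 1 1 - xinf)
      (-2*(γ:ℂ)*(ρ u 0 0 - ρ u 1 1 - xinf) - 2*β*(ρ u 1 0 - cinf)
        - 2*(starRingEnd ℂ) β*(ρ u 0 1 - binf)) u := by
    intro u hu
    have h := ((hρ u hu 0 0).sub (hρ u hu 1 1)).sub_const xinf
    refine h.congr_deriv (Eq.symm ?_)
    rw [L00', L11', hxinf, hbinf, hcinf]
    have htru := htrconst u hu
    push_cast
    field_simp
    linear_combination (-2*(γ:ℂ)*(d:ℂ)*((D:ℝ):ℂ)) * htru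
      + (4*(γ:ℂ)*s*(d:ℂ)) * hbb
      + (-2*(γ:ℂ)*(d:ℂ)*s) * hDc
  have hbD : ∀ u ≥ (0:ℝ), HasDerivAt (fun w => ρ w 0 1 - binf)
      (-((γ:ℂ) + Complex.I*ω)*(ρ u 0 1 - binf)
        + β*(ρ u 0 0 - ρ u 1 1 - xinf)) u := by
    intro u hu
    have h := (hρ u hu 0 1).sub_const binf
    refine h.congr_deriv (Eq.symm ?_)
    rw [L01', hxinf, hbinf]
    push_cast
    field_simp
    linear_combination (-(s*(d:ℂ)*β*(ω:ℂ)^2)) * Complex.I_sq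
  have hcD : ∀ u ≥ (0:ℝ), HasDerivAt (fun w => ρ w 1 0 - cinf)
      (-((γ:ℂ) - Complex.I*ω)*(ρ u 1 0 - cinf)
        + (starRingEnd ℂ) β*(ρ u 0 0 - ρ u 1 1 - xinf)) u := by
    intro u hu
    have h := (hρ u hu 1 0).sub_const cinf
    refine h.congr_deriv (Eq.symm ?_)
    rw [L10', hxinf, hcinf]
    push_cast
    field_simp
    linear_combination (-(s*(d:ℂ)*(starRingEnd ℂ) β*(ω:ℂ)^2)) * Complex.I_sq
  -- the Lyapunov function
  set V : ℝ → ℝ := fun w => Complex.normSq (ρ w 0 0 - ρ w 1 1 - xinf)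
      + 2 * Complex.normSq (ρ w 0 1 - binf) + 2 * Complex.normSq (ρ w 1 0 - cinf) with hV
  set W : ℝ → ℝ := fun w => Real.exp (2*γ*w) * V w with hW
  have hWD : ∀ u ≥ (0:ℝ), HasDerivAt W
      (Real.exp (2*γ*u) * (-2*γ* Complex.normSq (ρ u 0 0 - ρ u 1 1 - xinf))) u := by
    intro u hu
    have hx := hxD u hu
    have hb := hbD u hu
    have hc := hcD u hu
    have hVd := ((hx.cnormSq).add ((hb.cnormSq).const_mul 2)).add ((hc.cnormSq).const_mul 2)
    have hVd' : HasDerivAt V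
        (-4*γ*(Complex.normSq (ρ u 0 0 - ρ u 1 1 - xinf)
          + Complex.normSq (ρ u 0 1 - binf) + Complex.normSq (ρ u 1 0 - cinf))) u := by
      refine hVd.congr_deriv (Eq.symm ?_)
      simp only [Complex.normSq_apply, Complex.mul_re, Complex.mul_im, Complex.add_re,
        Complex.add_im, Complex.sub_re, Complex.sub_im, Complex.neg_re, Complex.neg_im,
        Complex.ofReal_re, Complex.ofReal_im, Complex.I_re, Complex.I_im, Complex.conj_re,
        Complex.conj_im, Complex.re_ofNat, Complex.im_ofNat]
      ring
    have hexp : HasDerivAt (fun w : ℝ => Real.exp (2*γ*w)) (Real.exp (2*γ*u) * (2*γ)) u := by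
      simpa using ((hasDerivAt_id u).const_mul (2*γ)).exp
    have := hexp.mul hVd'
    refine this.congr_deriv (Eq.symm ?_)
    simp only [hV]
    ring
  have hWanti : AntitoneOn W (Set.Ici (0:ℝ)) := by
    apply antitoneOn_of_deriv_nonpos (convex_Ici 0)
    · intro u hu
      exact ((hWD u hu).continuousAt).continuousWithinAt
    · intro u hu
      rw [interior_Ici] at hu
      exact ((hWD u (le_of_lt hu)).differentiableAt).differentiableWithinAt
    · intro u hu
      rw [interior_Ici] at hu
      rw [(hWD u (le_of_lt hu)).deriv]
      have h1 : -2*γ* Complex.normSq (ρ u 0 0 - ρ u 1 1 - xinf) ≤ 0 := by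
        nlinarith [Complex.normSq_nonneg (ρ u 0 0 - ρ u 1 1 - xinf)]
      exact mul_nonpos_iff.mpr (Or.inl ⟨Real.exp_nonneg _, h1⟩)
  have hVbound : V t ≤ Real.exp (-(2*γ)*t) * V 0 := by
    have h := hWanti (Set.self_mem_Ici) (Set.mem_Ici.mpr ht) ht
    simp only [hW, mul_zero, Real.exp_zero, one_mul] at h
    have hp : (0:ℝ) < Real.exp (2*γ*t) := Real.exp_pos _
    have h2 := mul_le_mul_of_nonneg_left h (Real.exp_nonneg (-(2*γ)*t))
    rw [← mul_assoc, ← Real.exp_add] at h2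
    simpa using h2
  -- bound V 0
  obtain ⟨F, hF⟩ : ∃ r : ℝ, r = frobeniusNorm ϱ := ⟨_, rfl⟩
  obtain ⟨K, hK⟩ : ∃ r : ℝ, r = ‖(d : ℂ) * s‖ := ⟨_, rfl⟩
  rw [← hF, ← hK]
  have hK0 : 0 ≤ K := by rw [hK]; exact norm_nonneg _
  have hF0 : 0 ≤ F := by rw [hF]; exact Real.sqrt_nonneg _
  have hFsq : F^2 = ∑ i, ∑ j, ‖ϱ i j‖ ^ 2 := by
    rw [hF, frobeniusNorm, Real.sq_sqrt]
    positivity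
  have hKsq : K^2 = d^2 * Complex.normSq s := by
    rw [hK, norm_mul, mul_pow, Complex.norm_real, Real.norm_eq_abs, sq_abs, Complex.sq_norm]
  have hxinfb : Complex.normSq xinf ≤ K^2 := by
    rw [hxinf, Complex.normSq_mul, Complex.normSq_ofReal, hKsq]
    have h1 : (d * (γ^2+ω^2) / D)^2 ≤ d^2 := by
      rw [div_pow, div_le_iff₀ (by positivity)]
      have : (γ^2+ω^2)^2 ≤ D^2 := by
        rw [hDdef]; nlinarith [norm_nonneg β, sq_nonneg ‖β‖]
      nlinarith
    nlinarith [Complex.normSq_nonneg s]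
  have hbinfb : Complex.normSq binf ≤ K^2 / 8 := by
    have h1 : Complex.normSq ((γ:ℂ) - (ω:ℂ)*Complex.I) = γ^2 + ω^2 := by
      simp [Complex.normSq_apply]; ring
    have hb' : Complex.normSq binf
        = Complex.normSq s * (d^2 * Complex.normSq β * (γ^2+ω^2) / D^2) := by
      rw [hbinf, Complex.normSq_mul, Complex.normSq_div, Complex.normSq_mul, Complex.normSq_mul,
        Complex.normSq_ofReal, Complex.normSq_ofReal, h1]
      ring
    rw [hb', hKsq]
    have key : 8 * (Complex.normSq β * (γ^2+ω^2)) ≤ D^2 := by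
      have hnb : Complex.normSq β = ‖β‖ ^ 2 := (Complex.sq_norm β).symm
      rw [hnb, hDdef]
      nlinarith [sq_nonneg ((γ^2+ω^2) - 2 * ‖β‖ ^ 2)]
    rw [← mul_div_assoc, div_le_div_iff₀ (by positivity) (by norm_num : (0:ℝ) < 8)]
    have hmul := mul_le_mul_of_nonneg_left key
      (mul_nonneg (sq_nonneg d) (Complex.normSq_nonneg s))
    nlinarith [hmul]
  have hcinfb : Complex.normSq cinf ≤ K^2 / 8 := by
    have h1 : Complex.normSq ((γ:ℂ) + (ω:ℂ)*Complex.I) = γ^2 + ω^2 := by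
      simp [Complex.normSq_apply]; ring
    have hc' : Complex.normSq cinf
        = Complex.normSq s * (d^2 * Complex.normSq β * (γ^2+ω^2) / D^2) := by
      rw [hcinf, Complex.normSq_mul, Complex.normSq_div, Complex.normSq_mul, Complex.normSq_mul,
        Complex.normSq_ofReal, Complex.normSq_ofReal, Complex.normSq_conj, h1]
      ring
    rw [hc', hKsq]
    have key : 8 * (Complex.normSq β * (γ^2+ω^2)) ≤ D^2 := by
      have hnb : Complex.normSq β = ‖β‖ ^ 2 := (Complex.sq_norm β).symm
      rw [hnb, hDdef]
      nlinarith [sq_nonneg ((γ^2+ω^2) - 2 * ‖β‖ ^ 2)]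
    rw [← mul_div_assoc, div_le_div_iff₀ (by positivity) (by norm_num : (0:ℝ) < 8)]
    have hmul := mul_le_mul_of_nonneg_left key
      (mul_nonneg (sq_nonneg d) (Complex.normSq_nonneg s))
    nlinarith [hmul]
  have hV0 : V 0 ≤ 4 * F^2 + 3 * K^2 := by
    have e1 : Complex.normSq (ρ 0 0 0 - ρ 0 1 1 - xinf)
        ≤ 4 * Complex.normSq (ϱ 0 0) + 4 * Complex.normSq (ϱ 1 1) + 2 * K^2 := by
      have := nsq_sub_le (ρ 0 0 0 - ρ 0 1 1) xinf
      have := nsq_sub_le (ρ 0 0 0) (ρ 0 1 1)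
      simp only [hρ0] at *
      nlinarith [hxinfb]
    have e2 : Complex.normSq (ρ 0 0 1 - binf) ≤ 2 * Complex.normSq (ϱ 0 1) + K^2/4 := by
      have := nsq_sub_le (ρ 0 0 1) binf
      simp only [hρ0] at *
      nlinarith [hbinfb]
    have e3 : Complex.normSq (ρ 0 1 0 - cinf) ≤ 2 * Complex.normSq (ϱ 1 0) + K^2/4 := by
      have := nsq_sub_le (ρ 0 1 0) cinf
      simp only [hρ0] at *
      nlinarith [hcinfb]
    have hFs : F^2 = Complex.normSq (ϱ 0 0) + Complex.normSq (ϱ 0 1)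
        + Complex.normSq (ϱ 1 0) + Complex.normSq (ϱ 1 1) := by
      rw [hFsq]
      simp [Fin.sum_univ_two, Complex.sq_norm]
      ring
    simp only [hV]
    rw [hFs]
    nlinarith
  -- relate trace norm to V t
  obtain ⟨htn0, htnsq⟩ := traceNorm_sq_le (ρ t - s • rhoAInf d ω γ β)
  have hentries : ∑ i, ∑ j, ‖(ρ t - s • rhoAInf d ω γ β) i j‖ ^ 2
      ≤ V t := by
    have htru := htrconst t ht
    have h00 : (ρ t - s • rhoAInf d ω γ β) 0 0 = (ρ t 0 0 - ρ t 1 1 - xinf) / 2 := by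
      simp only [Matrix.sub_apply, Matrix.smul_apply, rhoAInf, Matrix.of_apply, Matrix.cons_val_zero,
        Matrix.cons_val_one, Matrix.head_cons, Matrix.cons_val', Matrix.empty_val',
        Matrix.cons_val_fin_one, Matrix.head_fin_const, smul_eq_mul, hxinf]
      rw [← hDdef]
      have : ρ t 1 1 = s - ρ t 0 0 := by linear_combination htru
      rw [this]
      push_cast
      field_simp
      ring
    have h11 : (ρ t - s • rhoAInf d ω γ β) 1 1 = -((ρ t 0 0 - ρ t 1 1 - xinf) / 2) := by
      simp only [Matrix.sub_apply, Matrix.smul_apply, rhoAInf, Matrix.of_apply, Matrix.cons_val_zero,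
        Matrix.cons_val_one, Matrix.head_cons, Matrix.cons_val', Matrix.empty_val',
        Matrix.cons_val_fin_one, Matrix.head_fin_const, smul_eq_mul, hxinf]
      rw [← hDdef]
      have : ρ t 1 1 = s - ρ t 0 0 := by linear_combination htru
      rw [this]
      push_cast
      field_simp
      ring
    have hcast : ((γ^2+ω^2+2*‖β‖^2 : ℝ) : ℂ) = ((D:ℝ):ℂ) := by rw [hDdef]
    have h01 : (ρ t - s • rhoAInf d ω γ β) 0 1 = ρ t 0 1 - binf := by
      simp only [Matrix.sub_apply, Matrix.smul_apply, smul_eq_mul]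
      rw [show rhoAInf d ω γ β 0 1 = (d:ℂ)*β*((γ:ℂ)-(ω:ℂ)*Complex.I)
          /(((γ^2+ω^2+2*‖β‖^2 : ℝ)):ℂ) from rfl, hcast, hbinf]
    have h10 : (ρ t - s • rhoAInf d ω γ β) 1 0 = ρ t 1 0 - cinf := by
      simp only [Matrix.sub_apply, Matrix.smul_apply, smul_eq_mul]
      rw [show rhoAInf d ω γ β 1 0 = (d:ℂ)*(starRingEnd ℂ) β*((γ:ℂ)+(ω:ℂ)*Complex.I)
          /(((γ^2+ω^2+2*‖β‖^2 : ℝ)):ℂ) from rfl, hcast, hcinf]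
    rw [Fin.sum_univ_two]
    simp only [Fin.sum_univ_two, h00, h01, h10, h11]
    simp only [hV, Complex.sq_norm, norm_neg, norm_div, Complex.norm_ofNat]
    have hx2 : (‖ρ t 0 0 - ρ t 1 1 - xinf‖ / 2)^2
        = Complex.normSq (ρ t 0 0 - ρ t 1 1 - xinf) / 4 := by
      rw [div_pow, Complex.sq_norm]; norm_num
    rw [hx2]
    nlinarith [Complex.normSq_nonneg (ρ t 0 0 - ρ t 1 1 - xinf),
      Complex.normSq_nonneg (ρ t 0 1 - binf), Complex.normSq_nonneg (ρ t 1 0 - cinf)]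
  -- final assembly
  have hexp2 : Real.exp (-(2*γ)*t) = Real.exp (-γ*t) * Real.exp (-γ*t) := by
    rw [← Real.exp_add]; ring_nf
  have hRHS0 : 0 ≤ 4 * Real.exp (-γ * t) * (F + K) := by positivity
  have hchain : traceNorm (ρ t - s • rhoAInf d ω γ β) ^ 2
      ≤ (4 * Real.exp (-γ * t) * (F + K))^2 := by
    calc traceNorm (ρ t - s • rhoAInf d ω γ β) ^ 2
        ≤ 2 * ∑ i, ∑ j, ‖(ρ t - s • rhoAInf d ω γ β) i j‖ ^ 2 := htnsq
      _ ≤ 2 * V t := by linarith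
      _ ≤ 2 * (Real.exp (-(2*γ)*t) * V 0) := by
          have := hVbound; nlinarith
      _ ≤ 2 * (Real.exp (-(2*γ)*t) * (4*F^2 + 3*K^2)) := by
          have he : (0:ℝ) < Real.exp (-(2*γ)*t) := Real.exp_pos _
          nlinarith
      _ ≤ (4 * Real.exp (-γ * t) * (F + K))^2 := by
          rw [hexp2]
          have he : (0:ℝ) < Real.exp (-γ*t) := Real.exp_pos _
          nlinarith [mul_nonneg hF0 hK0, sq_nonneg (Real.exp (-γ*t))]
  calc traceNorm (ρ t - s • rhoAInf d ω γ β)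
      = Real.sqrt (traceNorm (ρ t - s • rhoAInf d ω γ β) ^ 2) := by
        rw [Real.sqrt_sq htn0]
    _ ≤ Real.sqrt ((4 * Real.exp (-γ * t) * (F + K))^2) := Real.sqrt_le_sqrt hchain
    _ = 4 * Real.exp (-γ * t) * (F + K) := Real.sqrt_sq hRHS0
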